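/- Let p ≥ 1 and 1 ≤ s ≤ p be natural numbers, and let v ∈ ℝ^p satisfy ‖v‖ = √p (Euclidean norm). If θ ∈ ℝ^p has at most s nonzero coordinates, then ‖θ − (1/p)⟨v,θ⟩ v‖² ≥ ‖θ‖² · (p − M(v,s))/p, where M(v,s) := max over subsets S ⊆ {1,…,p} with |S| ≤ s of ‖v_S‖², and v_S ∈ ℝ^p denotes the vector whose i-th coordinate equals v_i for i ∈ S and 0 otherwise. -/
import Mathlib


open Finset
open scoped Classical

noncomputable section

/-- `M v s` = maximum of `‖v_S‖²` over subsets `S` with `|S| ≤ s`. -/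
def maxSubNormSq {p : ℕ} (v : Fin p → ℝ) (s : ℕ) : ℝ :=
  ⨆ S : {S : Finset (Fin p) // S.card ≤ s}, ∑ i ∈ S.1, v i ^ 2

theorem sparse_orthogonal_projection_bound
    (p s : ℕ) (hp : 1 ≤ p) (hs1 : 1 ≤ s) (hs2 : s ≤ p)
    (v : Fin p → ℝ) (hv : Real.sqrt (∑ i, v i ^ 2) = Real.sqrt p)
    (θ : Fin p → ℝ) (hθ : Set.ncard {i | θ i ≠ 0} ≤ s) :
    (∑ i, θ i ^ 2) * (((p : ℝ) - maxSubNormSq v s) / p) ≤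
      ∑ i, (θ i - (1 / (p : ℝ)) * (∑ j, v j * θ j) * v i) ^ 2 := by
  have hp0 : (0:ℝ) < p := by exact_mod_cast hp
  -- ∑ v² = p
  have hvsq : (∑ i, v i ^ 2) = (p : ℝ) := by
    have h1 : (0:ℝ) ≤ ∑ i, v i ^ 2 := Finset.sum_nonneg fun i _ => sq_nonneg _
    have := congrArg (· ^ 2) hv
    simpa [Real.sq_sqrt h1, Real.sq_sqrt hp0.le] using this
  set S : Finset (Fin p) := Finset.univ.filter (fun i => θ i ≠ 0) with hS
  have hzero : ∀ i ∉ S, θ i = 0 := by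
    intro i hi
    by_contra h
    exact hi (Finset.mem_filter.mpr ⟨Finset.mem_univ i, h⟩)
  have hcard : S.card ≤ s := by
    have : {i | θ i ≠ 0} = (S : Set (Fin p)) := by
      ext i; simp [hS]
    rw [this, Set.ncard_coe_finset] at hθ
    exact hθ
  have hM : (∑ i ∈ S, v i ^ 2) ≤ maxSubNormSq v s :=
    le_ciSup (f := fun S : {S : Finset (Fin p) // S.card ≤ s} => ∑ i ∈ S.1, v i ^ 2)
      (Set.Finite.bddAbove (Set.finite_range _)) ⟨S, hcard⟩
  set T : ℝ := ∑ j, v j * θ j with hT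
  have hTS : T = ∑ j ∈ S, v j * θ j := by
    rw [hT]
    refine (Finset.sum_subset (Finset.subset_univ S) ?_).symm
    intro i _ hi
    simp [hzero i hi]
  have hθS : (∑ j ∈ S, θ j ^ 2) = ∑ j, θ j ^ 2 := by
    refine Finset.sum_subset (Finset.subset_univ S) ?_
    intro i _ hi
    simp [hzero i hi]
  have hcs : T ^ 2 ≤ maxSubNormSq v s * ∑ j, θ j ^ 2 := by
    have h1 : T ^ 2 ≤ (∑ j ∈ S, v j ^ 2) * (∑ j ∈ S, θ j ^ 2) := by
      rw [hTS]
      exact Finset.sum_mul_sq_le_sq_mul_sq S v θ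
    calc T ^ 2 ≤ (∑ j ∈ S, v j ^ 2) * (∑ j ∈ S, θ j ^ 2) := h1
      _ ≤ maxSubNormSq v s * ∑ j, θ j ^ 2 := by
          rw [hθS]
          exact mul_le_mul_of_nonneg_right hM (Finset.sum_nonneg fun i _ => sq_nonneg _)
  -- expand RHS
  have hrhs : (∑ i, (θ i - (1 / (p : ℝ)) * T * v i) ^ 2)
      = (∑ i, θ i ^ 2) - T ^ 2 / p := by
    have : ∀ i, (θ i - (1 / (p : ℝ)) * T * v i) ^ 2
        = θ i ^ 2 - 2 * ((1/(p:ℝ)) * T) * (v i * θ i) + ((1/(p:ℝ)) * T)^2 * v i ^ 2 := by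
      intro i; ring
    rw [Finset.sum_congr rfl fun i _ => this i]
    rw [Finset.sum_add_distrib, Finset.sum_sub_distrib, ← Finset.mul_sum, ← Finset.mul_sum,
      hvsq, ← hT]
    field_simp
    ring
  rw [hrhs, show (∑ i, θ i ^ 2) * (((p:ℝ) - maxSubNormSq v s) / p)
      = (∑ i, θ i ^ 2) * ((p:ℝ) - maxSubNormSq v s) / p from (mul_div_assoc _ _ _).symm,
    div_le_iff₀ hp0]
  have hdm : T ^ 2 / (p:ℝ) * p = T ^ 2 := div_mul_cancel₀ _ hp0.ne'
  nlinarith [hcs, hdm]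

end
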